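/- For partitions P₁, P₂ of V: if P₁ refines P₂ then P₁ ≤_U P₂, and if P₁ ≤_U P₂ then P₁ ≤_CA P₂; moreover neither implication can be reversed in general. -/

import Mathlib

open Set

section Defs

variable {α : Type*}

/-- A K-space over `W`: a collection of nonempty subsets of `W` covering `W`. -/
def Covers (K : Set (Set α)) (W : Set α) : Prop :=
  (∀ X ∈ K, X.Nonempty) ∧ ⋃₀ K = W

/-- A partition of `W`: a K-space whose members are pairwise disjoint. -/
def IsPart (K : Set (Set α)) (W : Set α) : Prop :=
  Covers K W ∧ ∀ X ∈ K, ∀ Y ∈ K, X ≠ Y → X ∩ Y = ∅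

/-- Upper (Smyth) ordering. -/
def leU (K₁ K₂ : Set (Set α)) : Prop := ∀ X₂ ∈ K₂, ∃ X₁ ∈ K₁, X₁ ⊆ X₂

/-- Lower (Hoare) ordering. -/
def leL (K₁ K₂ : Set (Set α)) : Prop := ∀ X₁ ∈ K₁, ∃ X₂ ∈ K₂, X₁ ⊆ X₂

/-- Egli-Milner ordering. -/
def leEM (K₁ K₂ : Set (Set α)) : Prop := leU K₁ K₂ ∧ leL K₁ K₂

/-- `P₁` refines `P₂`: every block of `P₁` is contained in some block of `P₂`. -/
def Refines (P₁ P₂ : Set (Set α)) : Prop := ∀ X₁ ∈ P₁, ∃ X₂ ∈ P₂, X₁ ⊆ X₂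

/-- `X` answers query `Q` relative to universe `U`. -/
def Answers (U X Q : Set α) : Prop := X ⊆ Q ∨ X ⊆ U \ Q

def CanAnswer (U : Set α) (K : Set (Set α)) (Q : Set α) : Prop := ∃ X ∈ K, Answers U X Q

def WillAnswer (U : Set α) (K : Set (Set α)) (Q : Set α) : Prop := ∀ X ∈ K, Answers U X Q

/-- Can-answer ordering relative to universe `U`. -/
def leCA (U : Set α) (K₁ K₂ : Set (Set α)) : Prop :=
  ∀ Q ⊆ U, CanAnswer U K₂ Q → CanAnswer U K₁ Q

/-- Will-answer ordering relative to universe `U`. -/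
def leWA (U : Set α) (K₁ K₂ : Set (Set α)) : Prop :=
  ∀ Q ⊆ U, WillAnswer U K₂ Q → WillAnswer U K₁ Q

/-- `K` can confirm fact `F`. -/
def CanConfirm (K : Set (Set α)) (F : Set α) : Prop := ∃ X ∈ K, X ⊆ F

/-- `K` can have uncertainty `F`. -/
def HasUncertainty (K : Set (Set α)) (F : Set α) : Prop := ∃ X ∈ K, F ⊆ X

/-- The observation (equivalence class of attacker `A`) containing trace `t`. -/
def obsClass {T : Type*} (A : Setoid T) (t : T) : Set T := {u | A.r u t}

/-- The K-space of attacker `A` for system `S` with subject function `Φ`: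
knowledge sets `Φ(O ∩ S)` for observations `O` with `O ∩ S ≠ ∅`. -/
def kspace {T D : Type*} (Φ : T → D) (S : Set T) (A : Setoid T) : Set (Set D) :=
  {X | ∃ t ∈ S, X = Φ '' (obsClass A t ∩ S)}

/-- `R` (a set of pairs) is an equivalence relation on the subset `V`. -/
def IsEROn (V : Set α) (R : Set (α × α)) : Prop :=
  R ⊆ V ×ˢ V ∧ (∀ v ∈ V, (v, v) ∈ R) ∧ (∀ x y, (x, y) ∈ R → (y, x) ∈ R) ∧
    (∀ x y z, (x, y) ∈ R → (y, z) ∈ R → (x, z) ∈ R)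

/-- The equivalence class of `v` under the relation-as-set-of-pairs `R`. -/
def classOf (R : Set (α × α)) (v : α) : Set α := {u | (u, v) ∈ R}

/-- The partition `⟦R⟧` of `V` corresponding to an equivalence relation `R` on `V`. -/
def classPart (V : Set α) (R : Set (α × α)) : Set (Set α) :=
  {C | ∃ v ∈ V, C = classOf R v}

end Defs

/-- on partitions, refinement implies `≤_U` implies `≤_CA`,
and neither implication reverses. -/
theorem stmt8 :
    (∀ (α : Type) (V : Set α) (P₁ P₂ : Set (Set α)), IsPart P₁ V → IsPart P₂ V →
        Refines P₁ P₂ → leU P₁ P₂) ∧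
    (∀ (α : Type) (V : Set α) (P₁ P₂ : Set (Set α)), IsPart P₁ V → IsPart P₂ V →
        leU P₁ P₂ → leCA V P₁ P₂) ∧
    (∃ (V : Set ℕ) (P₁ P₂ : Set (Set ℕ)), IsPart P₁ V ∧ IsPart P₂ V ∧
        leU P₁ P₂ ∧ ¬ Refines P₁ P₂) ∧
    (∃ (V : Set ℕ) (P₁ P₂ : Set (Set ℕ)), IsPart P₁ V ∧ IsPart P₂ V ∧
        leCA V P₁ P₂ ∧ ¬ leU P₁ P₂) := by
  refine ⟨?_, ?_, ?_, ?_⟩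
  · -- Refines → leU
    rintro α V P₁ P₂ ⟨⟨h1ne, h1u⟩, _⟩ ⟨⟨h2ne, h2u⟩, h2d⟩ href X₂ hX₂
    obtain ⟨v, hv⟩ := h2ne X₂ hX₂
    have hvV : v ∈ V := by
      rw [← h2u]; exact ⟨X₂, hX₂, hv⟩
    have : v ∈ ⋃₀ P₁ := by rw [h1u]; exact hvV
    obtain ⟨X₁, hX₁, hvX₁⟩ := this
    obtain ⟨Y₂, hY₂, hsub⟩ := href X₁ hX₁
    have hYX : Y₂ = X₂ := by
      by_contra hne
      have : v ∈ Y₂ ∩ X₂ := ⟨hsub hvX₁, hv⟩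
      rw [h2d Y₂ hY₂ X₂ hX₂ hne] at this
      exact this
    exact ⟨X₁, hX₁, hYX ▸ hsub⟩
  · -- leU → leCA
    rintro α V P₁ P₂ _ _ hU Q _ ⟨X₂, hX₂, hans⟩
    obtain ⟨X₁, hX₁, hsub⟩ := hU X₂ hX₂
    refine ⟨X₁, hX₁, ?_⟩
    rcases hans with h | h
    · exact Or.inl (hsub.trans h)
    · exact Or.inr (hsub.trans h)
  · -- leU but not Refines
    refine ⟨{0, 1, 2, 3}, {{0}, {2}, {1, 3}}, {{0, 1}, {2, 3}}, ?_, ?_, ?_, ?_⟩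
    · constructor
      · constructor
        · rintro X (rfl | rfl | rfl)
          · exact ⟨0, rfl⟩
          · exact ⟨2, rfl⟩
          · exact ⟨1, by simp⟩
        · ext x
          simp only [Set.mem_sUnion, Set.mem_insert_iff, Set.mem_singleton_iff]
          constructor
          · rintro ⟨X, (rfl | rfl | rfl), hx⟩ <;> simp_all <;> omega
          · rintro (rfl | rfl | rfl | rfl)
            · exact ⟨{0}, by simp, rfl⟩
            · exact ⟨{1, 3}, by simp, by simp⟩
            · exact ⟨{2}, by simp, rfl⟩
            · exact ⟨{1, 3}, by simp, by simp⟩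
      · rintro X (rfl | rfl | rfl) Y (rfl | rfl | rfl) hne <;>
          first
          | exact absurd rfl hne
          | (ext x; simp)
    · constructor
      · constructor
        · rintro X (rfl | rfl)
          · exact ⟨0, by simp⟩
          · exact ⟨2, by simp⟩
        · ext x
          simp only [Set.mem_sUnion, Set.mem_insert_iff, Set.mem_singleton_iff]
          constructor
          · rintro ⟨X, (rfl | rfl), hx⟩ <;> simp_all <;> omega
          · rintro (rfl | rfl | rfl | rfl)
            · exact ⟨{0, 1}, by simp, by simp⟩
            · exact ⟨{0, 1}, by simp, by simp⟩
            · exact ⟨{2, 3}, by simp, by simp⟩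
            · exact ⟨{2, 3}, by simp, by simp⟩
      · rintro X (rfl | rfl) Y (rfl | rfl) hne <;>
          first
          | exact absurd rfl hne
          | (ext x; simp; omega)
    · rintro X₂ (rfl | rfl)
      · exact ⟨{0}, by simp, by simp⟩
      · exact ⟨{2}, by simp, by simp⟩
    · intro h
      obtain ⟨X₂, hX₂, hsub⟩ := h {1, 3} (by simp)
      simp only [Set.mem_insert_iff, Set.mem_singleton_iff] at hX₂
      rcases hX₂ with rfl | rfl
      · have := hsub (show (3 : ℕ) ∈ ({1, 3} : Set ℕ) by simp)
        simp at this
      · have := hsub (show (1 : ℕ) ∈ ({1, 3} : Set ℕ) by simp)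
        simp at this
  · -- leCA but not leU
    refine ⟨{0, 1, 2}, {{0, 1}, {2}}, {{0}, {1, 2}}, ?_, ?_, ?_, ?_⟩
    · constructor
      · constructor
        · rintro X (rfl | rfl)
          · exact ⟨0, by simp⟩
          · exact ⟨2, rfl⟩
        · ext x
          simp only [Set.mem_sUnion, Set.mem_insert_iff, Set.mem_singleton_iff]
          constructor
          · rintro ⟨X, (rfl | rfl), hx⟩ <;> simp_all <;> omega
          · rintro (rfl | rfl | rfl)
            · exact ⟨{0, 1}, by simp, by simp⟩
            · exact ⟨{0, 1}, by simp, by simp⟩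
            · exact ⟨{2}, by simp, rfl⟩
      · rintro X (rfl | rfl) Y (rfl | rfl) hne <;>
          first
          | exact absurd rfl hne
          | (ext x; simp)
    · constructor
      · constructor
        · rintro X (rfl | rfl)
          · exact ⟨0, rfl⟩
          · exact ⟨1, by simp⟩
        · ext x
          simp only [Set.mem_sUnion, Set.mem_insert_iff, Set.mem_singleton_iff]
          constructor
          · rintro ⟨X, (rfl | rfl), hx⟩ <;> simp_all <;> omega
          · rintro (rfl | rfl | rfl)
            · exact ⟨{0}, by simp, rfl⟩
            · exact ⟨{1, 2}, by simp, by simp⟩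
            · exact ⟨{1, 2}, by simp, by simp⟩
      · rintro X (rfl | rfl) Y (rfl | rfl) hne <;>
          first
          | exact absurd rfl hne
          | (ext x; simp)
    · intro Q hQ _
      by_cases h2 : (2 : ℕ) ∈ Q
      · exact ⟨{2}, by simp, Or.inl (by simpa using h2)⟩
      · refine ⟨{2}, by simp, Or.inr ?_⟩
        intro x hx
        simp only [Set.mem_singleton_iff] at hx
        subst hx
        exact ⟨by simp, h2⟩
    · intro h
      obtain ⟨X₁, hX₁, hsub⟩ := h {0} (by simp)
      simp only [Set.mem_insert_iff, Set.mem_singleton_iff] at hX₁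
      rcases hX₁ with rfl | rfl
      · have := hsub (show (1 : ℕ) ∈ ({0, 1} : Set ℕ) by simp)
        simp at this
      · have := hsub (show (2 : ℕ) ∈ ({2} : Set ℕ) by simp)
        simp at this
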